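/- Bound on the total size of a characteristic sample: every minimal Moore machine M = (I,O,Q,q0,δ,λ) with nonempty input alphabet I admits a characteristic sample S_IO with at most (|Q|·|I| + 1)·(|Q| + 1) traces in which moreover every input word has length at most |Q| + 1 + |Q|²; consequently the sum of the lengths of the input words of S_IO is at most (|Q|·|I| + 1)·(|Q| + 1)·(|Q| + 1 + |Q|²), i.e., O(|Q|⁴·|I|). -/

import Mathlib

/-- A (complete, deterministic) Moore machine with input alphabet `I`,
output alphabet `O`, state set `Q`, initial state `init`, total transition
function `trans` and total output function `out`. -/
structure Moore (I O Q : Type) where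
  init : Q
  trans : Q → I → Q
  out : Q → O

namespace Moore

variable {I O Q : Type}

/-- Extended transition function: `δ*(q,ε)=q` and `δ*(q,w·a)=δ(δ*(q,w),a)`. -/
def deltaStar (M : Moore I O Q) (q : Q) (w : List I) : Q :=
  w.foldl M.trans q

/-- Extended output function: `λ*(q,w)` lists the output `λ(δ*(q,u))` for
every prefix `u` of `w` in order; this satisfies `λ*(q,ε)=λ(q)` and
`λ*(q,w·a)=λ*(q,w)·λ(δ*(q,w·a))`. -/
def lambdaStar (M : Moore I O Q) (q : Q) (w : List I) : List O :=
  w.inits.map fun u => M.out (M.deltaStar q u)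

/-- Two Moore machines over the same alphabets are equivalent iff they produce
the same output word on every input word. -/
def Equivalent {Q' : Type} (M : Moore I O Q) (M' : Moore I O Q') : Prop :=
  ∀ w : List I, M.lambdaStar M.init w = M'.lambdaStar M'.init w

/-- `M` is minimal iff every Moore machine equivalent to `M` has at least as
many states. -/
def Minimal [Fintype Q] (M : Moore I O Q) : Prop :=
  ∀ (Q' : Type) [Fintype Q'] (M' : Moore I O Q'),
    M.Equivalent M' → Fintype.card Q ≤ Fintype.card Q'

end Moore

/-- Shortlex ("length then lexicographic") strict order on words. -/
def ShortlexLt {I : Type} [LinearOrder I] (w w' : List I) : Prop :=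
  w.length < w'.length ∨ (w.length = w'.length ∧ List.Lex (· < ·) w w')

/-- `w` is the shortlex-least element of the set `S` of words. -/
def IsShortlexLeast {I : Type} [LinearOrder I] (S : Set (List I)) (w : List I) : Prop :=
  w ∈ S ∧ ∀ v ∈ S, w = v ∨ ShortlexLt w v

/-- The set of all prefixes of words in `S`. -/
def wordPrefixes {I : Type} (S : Set (List I)) : Set (List I) :=
  {u | ∃ w ∈ S, u <+: w}

namespace Moore

variable {I O Q : Type}

/-- `SP` is the shortest-prefix map of `M`: for every state `q`, `SP q` is the
shortlex-least word reaching `q` from the initial state. -/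
def IsShortestPrefixMap [LinearOrder I] (M : Moore I O Q) (SP : Q → List I) : Prop :=
  ∀ q : Q, IsShortlexLeast {w | M.deltaStar M.init w = q} (SP q)

/-- The nucleus `N_L(M)`: the empty word together with all one-letter
extensions of shortest prefixes. -/
def nucleus (_M : Moore I O Q) (SP : Q → List I) : Set (List I) :=
  {[]} ∪ {w | ∃ q : Q, ∃ a : I, w = SP q ++ [a]}

/-- `MD` is a minimum-distinguishing-suffix map of `M`: for all distinct
states `qu qv`, `MD qu qv` is the shortlex-least word on which the outputs
from `qu` and from `qv` differ. -/
def IsMinDistSuffixMap [LinearOrder I] (M : Moore I O Q) (MD : Q → Q → List I) : Prop :=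
  ∀ qu qv : Q, qu ≠ qv →
    IsShortlexLeast {w | M.lambdaStar qu w ≠ M.lambdaStar qv w} (MD qu qv)

/-- `M` is consistent with the Moore `(I,O)`-trace `t = (ρI, ρO)` iff running
`M` on `ρI` from the initial state produces `ρO`. -/
def ConsistentTrace (M : Moore I O Q) (t : List I × List O) : Prop :=
  M.lambdaStar M.init t.1 = t.2

/-- `S` is a characteristic sample for `M` (with shortest-prefix map `SP` and
minimum-distinguishing-suffix map `MD`):
(1) the nucleus is contained in the prefixes of the input words of `S`, and
(2) for all `u ∈ S_P(M)` and `v ∈ N_L(M)` reaching different states, both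
`u·w` and `v·w` are prefixes of input words of `S`, where `w` is the minimum
distinguishing suffix of the two states. -/
def CharSample [LinearOrder I] (M : Moore I O Q) (SP : Q → List I)
    (MD : Q → Q → List I) (S : Set (List I × List O)) : Prop :=
  M.nucleus SP ⊆ wordPrefixes (Prod.fst '' S) ∧
  ∀ u ∈ Set.range SP, ∀ v ∈ M.nucleus SP,
    M.deltaStar M.init u ≠ M.deltaStar M.init v →
      u ++ MD (M.deltaStar M.init u) (M.deltaStar M.init v) ∈ wordPrefixes (Prod.fst '' S) ∧
      v ++ MD (M.deltaStar M.init u) (M.deltaStar M.init v) ∈ wordPrefixes (Prod.fst '' S)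

end Moore




namespace Moore
variable {I O Q : Type}

lemma deltaStar_append (M : Moore I O Q) (q : Q) (u v : List I) :
    M.deltaStar q (u ++ v) = M.deltaStar (M.deltaStar q u) v :=
  List.foldl_append ..

lemma lambdaStar_nil (M : Moore I O Q) (q : Q) : M.lambdaStar q [] = [M.out q] := rfl

lemma lambdaStar_concat (M : Moore I O Q) (q : Q) (w : List I) (a : I) :
    M.lambdaStar q (w ++ [a]) = M.lambdaStar q w ++ [M.out (M.deltaStar q (w ++ [a]))] := by
  simp [lambdaStar, List.inits_append]

lemma length_lambdaStar (M : Moore I O Q) (q : Q) (w : List I) :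
    (M.lambdaStar q w).length = w.length + 1 := by
  simp [lambdaStar]

lemma lambdaStar_ne_of_out_ne (M : Moore I O Q) (qu qv : Q) (w : List I)
    (h : M.out (M.deltaStar qu w) ≠ M.out (M.deltaStar qv w)) :
    M.lambdaStar qu w ≠ M.lambdaStar qv w := by
  induction w using List.reverseRecOn with
  | nil => simpa [lambdaStar_nil, deltaStar] using h
  | append_singleton w a _ =>
      intro he
      rw [lambdaStar_concat, lambdaStar_concat] at he
      have := List.append_inj_right he (by simp [length_lambdaStar])
      simp at this
      exact h this

end Moore

section Shortlex
variable {I : Type} [LinearOrder I]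

lemma lex_asymm : ∀ {w v : List I}, List.Lex (· < ·) w v → ¬ List.Lex (· < ·) v w := by
  intro w v h
  induction h with
  | nil => intro h'; cases h'
  | @cons a l₁ l₂ h ih => intro h'; cases h' with
    | cons h'' => exact ih h''
    | rel h'' => exact absurd h'' (lt_irrefl a)
  | @rel a l₁ b l₂ hab => intro h'; cases h' with
    | cons _ => exact absurd hab (lt_irrefl _)
    | rel h'' => exact absurd hab (not_lt_of_gt h'')

lemma shortlexLt_asymm {w v : List I} (h : ShortlexLt w v) : ¬ ShortlexLt v w := by
  rcases h with h | ⟨hl, hx⟩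
  · rintro (h' | ⟨hl', _⟩) <;> omega
  · rintro (h' | ⟨_, hx'⟩)
    · omega
    · exact lex_asymm hx hx'

lemma shortlexLt_irrefl (w : List I) : ¬ ShortlexLt w w := fun h => shortlexLt_asymm h h

lemma isShortlexLeast_unique {S : Set (List I)} {w w' : List I}
    (h : IsShortlexLeast S w) (h' : IsShortlexLeast S w') : w = w' := by
  rcases h.2 w' h'.1 with he | hlt
  · exact he
  · rcases h'.2 w h.1 with he | hlt'
    · exact he.symm
    · exact absurd hlt' (shortlexLt_asymm hlt)

lemma not_shortlexLt_nil (w : List I) : ¬ ShortlexLt w [] := by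
  rintro (h | ⟨hl, hx⟩)
  · simp at h
  · obtain rfl : w = [] := List.length_eq_zero_iff.mp (by simpa using hl)
    cases hx

lemma lex_append_of_length_eq : ∀ {w v : List I}, w.length = v.length →
    List.Lex (· < ·) w v → ∀ s t : List I, List.Lex (· < ·) (w ++ s) (v ++ t) := by
  intro w v hl hx
  induction hx with
  | nil => simp at hl
  | cons h ih => intro s t; exact List.Lex.cons (ih (by simpa using hl) s t)
  | rel h => intro s t; exact List.Lex.rel h

lemma shortlexLt_concat {w v : List I} (h : ShortlexLt w v) (a : I) :
    ShortlexLt (w ++ [a]) (v ++ [a]) := by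
  rcases h with h | ⟨hl, hx⟩
  · left; simp; omega
  · right; exact ⟨by simp [hl], lex_append_of_length_eq hl hx [a] [a]⟩

end Shortlex

lemma exists_cut {I α : Type} [Fintype α] (g : List I → α) (w : List I)
    (hw : Fintype.card α ≤ w.length) :
    ∃ i j : ℕ, i < j ∧ j ≤ w.length ∧ g (w.take i) = g (w.take j) := by
  obtain ⟨x, y, hxy, he⟩ := Fintype.exists_ne_map_eq_of_card_lt
    (fun i : Fin (w.length + 1) => g (w.take i)) (by simp; omega)
  rcases lt_or_gt_of_ne (Fin.val_ne_of_ne hxy) with h | h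
  · exact ⟨x, y, h, by omega, he⟩
  · exact ⟨y, x, h, by omega, he.symm⟩

namespace Moore
variable {I O Q : Type} [LinearOrder I]

lemma deltaStar_cut (M : Moore I O Q) (q : Q) {w : List I} {i j : ℕ}
    (hij : i < j) (hj : j ≤ w.length)
    (he : M.deltaStar q (w.take i) = M.deltaStar q (w.take j)) :
    M.deltaStar q (w.take i ++ w.drop j) = M.deltaStar q w := by
  conv_rhs => rw [← List.take_append_drop j w]
  rw [deltaStar_append, deltaStar_append, he]

lemma out_ne_of_least (M : Moore I O Q) {qu qv : Q} {w : List I}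
    (h : IsShortlexLeast {w | M.lambdaStar qu w ≠ M.lambdaStar qv w} w) :
    M.out (M.deltaStar qu w) ≠ M.out (M.deltaStar qv w) := by
  induction w using List.reverseRecOn with
  | nil => simpa [lambdaStar_nil, deltaStar] using h.1
  | append_singleton w a _ =>
      intro he
      have hw : M.lambdaStar qu w ≠ M.lambdaStar qv w := by
        intro heq
        apply h.1
        rw [lambdaStar_concat, lambdaStar_concat, heq, he]
      rcases h.2 w hw with heq | hlt
      · have := congrArg List.length heq; simp at this
      · rcases hlt with hl | ⟨hl, _⟩ <;> simp at hl <;> omega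

lemma length_lt_of_least_reach [Fintype Q] (M : Moore I O Q) {q : Q} {w : List I}
    (h : IsShortlexLeast {w | M.deltaStar M.init w = q} w) :
    w.length < Fintype.card Q := by
  by_contra hge
  push_neg at hge
  obtain ⟨i, j, hij, hj, he⟩ := exists_cut (fun u => M.deltaStar M.init u) w hge
  set w' := w.take i ++ w.drop j with hw'
  have hlen : w'.length < w.length := by
    simp [hw', List.length_take, List.length_drop]; omega
  have hmem : M.deltaStar M.init w' = q := by
    rw [M.deltaStar_cut M.init hij hj he]; exact h.1
  rcases h.2 w' hmem with heq | hlt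
  · rw [heq] at hlen; omega
  · rcases hlt with hl | ⟨hl, _⟩ <;> omega

lemma length_lt_of_least_dist [Fintype Q] (M : Moore I O Q) {qu qv : Q} {w : List I}
    (h : IsShortlexLeast {w | M.lambdaStar qu w ≠ M.lambdaStar qv w} w) :
    w.length < Fintype.card Q ^ 2 := by
  by_contra hge
  push_neg at hge
  have hcard : Fintype.card (Q × Q) ≤ w.length := by
    rw [Fintype.card_prod]; rw [pow_two] at hge; exact hge
  obtain ⟨i, j, hij, hj, he⟩ :=
    exists_cut (fun u => (M.deltaStar qu u, M.deltaStar qv u)) w hcard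
  simp only [Prod.mk.injEq] at he
  set w' := w.take i ++ w.drop j with hw'
  have hlen : w'.length < w.length := by
    simp [hw', List.length_take, List.length_drop]; omega
  have h1 : M.deltaStar qu w' = M.deltaStar qu w := M.deltaStar_cut qu hij hj he.1
  have h2 : M.deltaStar qv w' = M.deltaStar qv w := M.deltaStar_cut qv hij hj he.2
  have hmem : M.lambdaStar qu w' ≠ M.lambdaStar qv w' := by
    apply M.lambdaStar_ne_of_out_ne
    rw [h1, h2]
    exact M.out_ne_of_least h
  rcases h.2 w' hmem with heq | hlt
  · rw [heq] at hlen; omega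
  · rcases hlt with hl | ⟨hl, _⟩ <;> omega

end Moore

namespace Moore
variable {I O Q : Type} [LinearOrder I]

lemma range_SP_subset_nucleus (M : Moore I O Q) {SP : Q → List I}
    (hSP : M.IsShortestPrefixMap SP) (q : Q) : SP q ∈ M.nucleus SP := by
  rcases List.eq_nil_or_concat (SP q) with h | ⟨w, a, h⟩
  · simp [nucleus, h]
  · rw [List.concat_eq_append] at h
    right
    rcases (hSP (M.deltaStar M.init w)).2 w rfl with heq | hlt
    · exact ⟨M.deltaStar M.init w, a, by rw [h, heq]⟩
    · exfalso
      set p := M.deltaStar M.init w with hp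
      have hreach : M.deltaStar M.init (SP p ++ [a]) = q := by
        rw [deltaStar_append, (hSP p).1]
        have : M.deltaStar M.init (w ++ [a]) = q := by rw [← h]; exact (hSP q).1
        rw [deltaStar_append] at this
        exact this
      have hlt2 : ShortlexLt (SP p ++ [a]) (SP q) := by
        rw [h]; exact shortlexLt_concat hlt a
      rcases (hSP q).2 (SP p ++ [a]) hreach with heq2 | hlt3
      · rw [heq2] at hlt2; exact shortlexLt_irrefl _ hlt2
      · exact shortlexLt_asymm hlt2 hlt3

lemma MD_symm (M : Moore I O Q) {MD : Q → Q → List I}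
    (hMD : M.IsMinDistSuffixMap MD) {qu qv : Q} (h : qu ≠ qv) :
    MD qu qv = MD qv qu := by
  apply isShortlexLeast_unique (hMD qu qv h)
  have := hMD qv qu h.symm
  have hset : {w | M.lambdaStar qv w ≠ M.lambdaStar qu w}
      = {w | M.lambdaStar qu w ≠ M.lambdaStar qv w} := Set.ext fun w => ne_comm
  rwa [hset] at this

end Moore


/-- Bound on the total size of a characteristic sample:
every minimal Moore machine with nonempty input alphabet admits a
characteristic sample with at most `(|Q|·|I| + 1)·(|Q| + 1)` traces in which
every input word has length at most `|Q| + 1 + |Q|²`; consequently the sum of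
the lengths of its input words is at most
`(|Q|·|I| + 1)·(|Q| + 1)·(|Q| + 1 + |Q|²)`. -/
theorem exists_small_total_characteristic_sample {I O Q : Type} [LinearOrder I]
    [Fintype I] [Fintype O] [DecidableEq O] [Fintype Q] [Nonempty I]
    (M : Moore I O Q) (hmin : M.Minimal)
    (SP : Q → List I) (hSP : M.IsShortestPrefixMap SP)
    (MD : Q → Q → List I) (hMD : M.IsMinDistSuffixMap MD) :
    ∃ S : Finset (List I × List O),
      (∀ t ∈ S, M.ConsistentTrace t) ∧
      M.CharSample SP MD ↑S ∧
      S.card ≤ (Fintype.card Q * Fintype.card I + 1) * (Fintype.card Q + 1) ∧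
      (∀ t ∈ S, t.1.length ≤ Fintype.card Q + 1 + Fintype.card Q ^ 2) ∧
      ∑ t ∈ S, t.1.length ≤
        (Fintype.card Q * Fintype.card I + 1) * (Fintype.card Q + 1) *
          (Fintype.card Q + 1 + Fintype.card Q ^ 2) := by
    classical
  have hNQ : Nonempty Q := ⟨M.init⟩
  set NF : Finset (List I) :=
    {([] : List I)} ∪ Finset.univ.image (fun p : Q × I => SP p.1 ++ [p.2]) with hNF
  have hNFmem : ∀ v, v ∈ M.nucleus SP ↔ v ∈ NF := by
    intro v
    constructor
    · rintro (h | ⟨q, a, rfl⟩)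
      · rw [h]; simp [hNF]
      · rw [hNF]
        exact Finset.mem_union_right _
          (Finset.mem_image.mpr ⟨(q, a), Finset.mem_univ _, rfl⟩)
    · intro h
      simp only [hNF, Finset.mem_union, Finset.mem_singleton, Finset.mem_image,
        Finset.mem_univ, true_and] at h
      rcases h with rfl | ⟨⟨q, a⟩, rfl⟩
      · exact Or.inl rfl
      · exact Or.inr ⟨q, a, rfl⟩
  set SI : Finset (List I) := NF.biUnion (fun v => {v} ∪
    (Finset.univ.filter (fun q : Q => q ≠ M.deltaStar M.init v)).image
      (fun q => v ++ MD q (M.deltaStar M.init v))) with hSIdef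
  set S : Finset (List I × List O) := SI.image (fun w => (w, M.lambdaStar M.init w)) with hS
  have hself : ∀ v ∈ NF, v ∈ SI := fun v hv =>
    Finset.mem_biUnion.mpr ⟨v, hv, by simp⟩
  have hmd : ∀ v ∈ NF, ∀ q, q ≠ M.deltaStar M.init v →
      v ++ MD q (M.deltaStar M.init v) ∈ SI := by
    intro v hv q hq
    refine Finset.mem_biUnion.mpr ⟨v, hv, Finset.mem_union_right _ ?_⟩
    exact Finset.mem_image.mpr ⟨q, Finset.mem_filter.mpr ⟨Finset.mem_univ _, hq⟩, rfl⟩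
  have hpref : ∀ w ∈ SI, w ∈ wordPrefixes (Prod.fst '' (↑S : Set (List I × List O))) := by
    intro w hw
    exact ⟨w, ⟨(w, M.lambdaStar M.init w),
      Finset.mem_coe.mpr (Finset.mem_image_of_mem _ hw), rfl⟩, List.prefix_refl w⟩
  have hlenNF : ∀ v ∈ NF, v.length ≤ Fintype.card Q := by
    intro v hv
    simp only [hNF, Finset.mem_union, Finset.mem_singleton, Finset.mem_image,
      Finset.mem_univ, true_and] at hv
    rcases hv with rfl | ⟨⟨q, a⟩, rfl⟩
    · simp
    · have := M.length_lt_of_least_reach (hSP q)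
      simp only [List.length_append, List.length_singleton]
      omega
  have hlenSI : ∀ w ∈ SI, w.length ≤ Fintype.card Q + 1 + Fintype.card Q ^ 2 := by
    intro w hw
    rw [Finset.mem_biUnion] at hw
    obtain ⟨v, hv, hw⟩ := hw
    rw [Finset.mem_union] at hw
    have hv' := hlenNF v hv
    rcases hw with hw | hw
    · rw [Finset.mem_singleton] at hw
      subst hw; omega
    · obtain ⟨q, hq, rfl⟩ := Finset.mem_image.mp hw
      have hq' := (Finset.mem_filter.mp hq).2
      have := M.length_lt_of_least_dist (hMD q _ hq')
      simp only [List.length_append]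
      omega
  have hlenS : ∀ t ∈ S, t.1.length ≤ Fintype.card Q + 1 + Fintype.card Q ^ 2 := by
    intro t ht
    obtain ⟨w, hw, rfl⟩ := Finset.mem_image.mp ht
    exact hlenSI w hw
  have cNF : NF.card ≤ Fintype.card Q * Fintype.card I + 1 := by
    refine le_trans (Finset.card_union_le _ _) ?_
    have h1 : (Finset.univ.image (fun p : Q × I => SP p.1 ++ [p.2])).card
        ≤ Fintype.card Q * Fintype.card I := by
      refine le_trans (Finset.card_image_le) ?_
      simp [Fintype.card_prod]
    simp only [Finset.card_singleton]
    omega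
  have cSI : SI.card ≤ NF.card * (Fintype.card Q + 1) := by
    refine le_trans (Finset.card_biUnion_le) ?_
    refine le_trans (Finset.sum_le_card_nsmul _ _ (Fintype.card Q + 1) ?_) (by rw [smul_eq_mul])
    intro v _
    refine le_trans (Finset.card_union_le _ _) ?_
    have : ((Finset.univ.filter (fun q : Q => q ≠ M.deltaStar M.init v)).image
        (fun q => v ++ MD q (M.deltaStar M.init v))).card ≤ Fintype.card Q := by
      refine le_trans (Finset.card_image_le) ?_
      exact le_trans (Finset.card_filter_le _ _) (by simp)
    simp only [Finset.card_singleton]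
    omega
  have cS : S.card ≤ (Fintype.card Q * Fintype.card I + 1) * (Fintype.card Q + 1) :=
    le_trans Finset.card_image_le (le_trans cSI (Nat.mul_le_mul cNF le_rfl))
  refine ⟨S, ?_, ⟨?_, ?_⟩, cS, hlenS, ?_⟩
  · intro t ht
    obtain ⟨w, hw, rfl⟩ := Finset.mem_image.mp ht
    rfl
  · intro v hv
    exact hpref v (hself v ((hNFmem v).1 hv))
  · rintro u ⟨q, rfl⟩ v hv hne
    have hq : M.deltaStar M.init (SP q) = q := (hSP q).1
    rw [hq] at hne ⊢
    have hvNF : v ∈ NF := (hNFmem v).1 hv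
    have hne' : q ≠ M.deltaStar M.init v := hne
    constructor
    · have h1 : SP q ∈ NF := (hNFmem _).1 (M.range_SP_subset_nucleus hSP q)
      have h2 : M.deltaStar M.init v ≠ M.deltaStar M.init (SP q) := by
        rw [hq]; exact hne'.symm
      have h3 := hmd (SP q) h1 (M.deltaStar M.init v) h2
      rw [hq] at h3
      rw [M.MD_symm hMD hne']
      exact hpref _ h3
    · exact hpref _ (hmd v hvNF q hne')
  · refine le_trans (Finset.sum_le_card_nsmul S _ (Fintype.card Q + 1 + Fintype.card Q ^ 2) hlenS) ?_
    rw [smul_eq_mul]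
    exact Nat.mul_le_mul cS le_rfl
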